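/- arXiv:nlin/0204056 — 2 statements merged into one kernel-verified Lean document; each statement's English description precedes it below -/
import Mathlib

section
/- Let $0<\alpha<1$, $0<\beta<1$, $a>0$, $b>0$, and $\delta = \ln\alpha/\ln\beta$. Then there exist constants $0 < c_1 \le c_2$ such that for all $t \ge 1$, $c_1 t^{-\delta} \le \sum_{j=0}^\infty a\,\alpha^j e^{-b\beta^j t} \le c_2 t^{-\delta}$. -/
lemma exp_neg_le_aux (n : ℕ) (x : ℝ) (hx : 0 < x) :
    Real.exp (-x) ≤ ((n:ℝ) / x)^n := by
  rcases Nat.eq_zero_or_pos n with h0 | hn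
  · simp [h0, Real.exp_le_one_iff, hx.le]
  have hn0 : (0:ℝ) < n := by exact_mod_cast hn
  have h1 : x / n ≤ Real.exp (x / n) := by
    have := Real.add_one_le_exp (x / n); linarith
  have h2 : Real.exp (-(x/n)) ≤ (n:ℝ)/x := by
    rw [Real.exp_neg, show (n:ℝ)/x = (x/n)⁻¹ by field_simp]
    exact inv_anti₀ (by positivity) h1
  calc Real.exp (-x) = Real.exp (-(x/n)) ^ n := by
        rw [← Real.exp_nat_mul]; congr 1; field_simp
    _ ≤ ((n:ℝ)/x)^n := pow_le_pow_left₀ (Real.exp_nonneg _) h2 n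

set_option maxHeartbeats 1000000 in
theorem stmt_2 (a b α β : ℝ) (ha : 0 < a) (hb : 0 < b)
    (hα0 : 0 < α) (hα1 : α < 1) (hβ0 : 0 < β) (hβ1 : β < 1)
    (δ : ℝ) (hδ : δ = Real.log α / Real.log β) :
    ∃ c₁ c₂ : ℝ, 0 < c₁ ∧ c₁ ≤ c₂ ∧ ∀ t : ℝ, 1 ≤ t →
      c₁ * t ^ (-δ) ≤ (∑' j : ℕ, a * α ^ j * Real.exp (-b * β ^ j * t)) ∧
      (∑' j : ℕ, a * α ^ j * Real.exp (-b * β ^ j * t)) ≤ c₂ * t ^ (-δ) := by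
  have hlogα : Real.log α < 0 := Real.log_neg hα0 hα1
  have hlogβ : Real.log β < 0 := Real.log_neg hβ0 hβ1
  have hδpos : 0 < δ := by rw [hδ]; exact div_pos_of_neg_of_neg hlogα hlogβ
  have hβδ : β ^ δ = α := by
    rw [Real.rpow_def_of_pos hβ0, hδ, mul_div_cancel₀ _ (ne_of_lt hlogβ),
      Real.exp_log hα0]
  set n : ℕ := ⌈δ⌉₊ + 1 with hn
  have hδn : δ < (n:ℝ) := by
    calc δ ≤ (⌈δ⌉₊ : ℝ) := Nat.le_ceil δ
      _ < (n:ℝ) := by exact_mod_cast Nat.lt_succ_self _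
  have hβn_lt : β ^ n < α := by
    rw [← hβδ, ← Real.rpow_natCast β n]
    exact Real.rpow_lt_rpow_of_exponent_gt hβ0 hβ1 hδn
  have hβnpos : (0:ℝ) < β ^ n := pow_pos hβ0 n
  set r : ℝ := α / β ^ n with hr
  have hr1 : 1 < r := (one_lt_div hβnpos).mpr hβn_lt
  have hr0 : 0 < r - 1 := by linarith
  set K : ℝ := a * ((n:ℝ)/(b*β))^n * (r-1)⁻¹ with hK
  have hKpos : 0 < K := by
    apply mul_pos (mul_pos ha _) (inv_pos.mpr hr0)
    have : (0:ℝ) < n := by positivity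
    positivity
  refine ⟨a * Real.exp (-b) * β ^ δ, a * (1-α)⁻¹ + K, by positivity, ?_, ?_⟩
  · -- c₁ ≤ c₂
    have h1 : Real.exp (-b) ≤ 1 := Real.exp_le_one_iff.mpr (by linarith)
    have h2 : β ^ δ ≤ 1 := Real.rpow_le_one hβ0.le hβ1.le hδpos.le
    have h3 : (1:ℝ) ≤ (1-α)⁻¹ := by
      rw [le_inv_comm₀ one_pos (by linarith)]; simp; linarith
    have h4 : Real.exp (-b) * β ^ δ ≤ 1 :=
      mul_le_one₀ h1 (Real.rpow_pos_of_pos hβ0 δ).le h2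
    calc a * Real.exp (-b) * β ^ δ = a * (Real.exp (-b) * β ^ δ) := by ring
      _ ≤ a * 1 := mul_le_mul_of_nonneg_left h4 ha.le
      _ = a := mul_one a
      _ ≤ a * (1-α)⁻¹ := le_mul_of_one_le_right ha.le h3
      _ ≤ a * (1-α)⁻¹ + K := by linarith
  intro t ht
  have ht0 : 0 < t := lt_of_lt_of_le one_pos ht
  set f : ℕ → ℝ := fun j => a * α ^ j * Real.exp (-b * β ^ j * t) with hf
  have hfnn : ∀ j, 0 ≤ f j := fun j => by positivity
  have hfle : ∀ j, f j ≤ a * α ^ j := by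
    intro j
    have h1 : Real.exp (-b * β ^ j * t) ≤ 1 := by
      apply Real.exp_le_one_iff.mpr
      have hx : 0 < b * β ^ j * t := by positivity
      linarith
    calc f j ≤ a * α ^ j * 1 := mul_le_mul_of_nonneg_left h1 (by positivity)
      _ = a * α ^ j := mul_one _
  have hsum : Summable f :=
    Summable.of_nonneg_of_le hfnn hfle
      ((summable_geometric_of_lt_one hα0.le hα1).mul_left a)
  obtain ⟨j₀, hs1, hs2⟩ : ∃ m : ℕ, β ^ m * t ≤ 1 ∧ β ≤ β ^ m * t := by
    classical
    have hex : ∃ m : ℕ, β ^ m * t ≤ 1 := by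
      obtain ⟨m, hm⟩ := exists_pow_lt_of_lt_one (show (0:ℝ) < 1/t by positivity) hβ1
      rw [lt_div_iff₀ ht0] at hm
      exact ⟨m, hm.le⟩
    refine ⟨Nat.find hex, Nat.find_spec hex, ?_⟩
    rcases Nat.eq_zero_or_pos (Nat.find hex) with h0 | hpos
    · rw [h0]; simp; linarith
    · have hm : ¬ (β ^ (Nat.find hex - 1) * t ≤ 1) := Nat.find_min hex (by omega)
      push_neg at hm
      have hpow : β ^ (Nat.find hex) = β * β ^ (Nat.find hex - 1) := by
        rw [← pow_succ']; congr 1; omega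
      rw [hpow]
      nlinarith
  set s : ℝ := β ^ j₀ * t with hs
  have hs0 : 0 < s := by positivity
  have htδ : (0:ℝ) < t ^ δ := Real.rpow_pos_of_pos ht0 δ
  have htnegδ : t ^ (-δ) = (t ^ δ)⁻¹ := Real.rpow_neg ht0.le δ
  have hα_eq : (α : ℝ) ^ j₀ = s ^ δ * t ^ (-δ) := by
    have h1 : (α : ℝ) ^ j₀ = ((β:ℝ) ^ j₀ : ℝ) ^ δ := by
      rw [← hβδ, ← Real.rpow_natCast (β ^ δ) j₀, ← Real.rpow_natCast β j₀,
        ← Real.rpow_mul hβ0.le, ← Real.rpow_mul hβ0.le, mul_comm]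
    have h2 : (β:ℝ) ^ j₀ = s / t := by rw [hs]; field_simp
    rw [h1, h2, Real.div_rpow hs0.le ht0.le, htnegδ, div_eq_mul_inv]
  have hα_le : α ^ j₀ ≤ t ^ (-δ) := by
    rw [hα_eq]
    have : s ^ δ ≤ 1 := Real.rpow_le_one hs0.le hs1 hδpos.le
    nlinarith [Real.rpow_pos_of_pos ht0 (-δ)]
  have hα_ge : β ^ δ * t ^ (-δ) ≤ α ^ j₀ := by
    rw [hα_eq]
    have : β ^ δ ≤ s ^ δ := Real.rpow_le_rpow hβ0.le hs2 hδpos.le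
    nlinarith [Real.rpow_pos_of_pos ht0 (-δ)]
  constructor
  · -- lower bound
    have hterm : a * Real.exp (-b) * β ^ δ * t ^ (-δ) ≤ f j₀ := by
      have h1 : Real.exp (-b) ≤ Real.exp (-b * β ^ j₀ * t) := by
        apply Real.exp_le_exp.mpr
        have : b * (β ^ j₀ * t) ≤ b * 1 := mul_le_mul_of_nonneg_left hs1 hb.le
        nlinarith
      calc a * Real.exp (-b) * β ^ δ * t ^ (-δ)
          = a * (β ^ δ * t ^ (-δ)) * Real.exp (-b) := by ring
        _ ≤ a * α ^ j₀ * Real.exp (-b) := by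
            apply mul_le_mul_of_nonneg_right _ (Real.exp_nonneg _)
            exact mul_le_mul_of_nonneg_left hα_ge ha.le
        _ ≤ a * α ^ j₀ * Real.exp (-b * β ^ j₀ * t) :=
            mul_le_mul_of_nonneg_left h1 (by positivity)
    calc a * Real.exp (-b) * β ^ δ * t ^ (-δ) ≤ f j₀ := hterm
      _ ≤ ∑' j, f j := Summable.le_tsum hsum j₀ (fun i _ => hfnn i)
  · -- upper bound
    have hsplit : ∑' j, f j = ∑ i ∈ Finset.range j₀, f i + ∑' i, f (i + j₀) :=
      (Summable.sum_add_tsum_nat_add j₀ hsum).symm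
    have htail : ∑' i, f (i + j₀) ≤ a * (1-α)⁻¹ * t ^ (-δ) := by
      have h1 : ∑' i, f (i + j₀) ≤ ∑' i : ℕ, a * α ^ j₀ * α ^ i := by
        have hsum2 : Summable (fun i => f (i + j₀)) :=
          (summable_nat_add_iff (f := f) j₀).mpr hsum
        apply Summable.tsum_le_tsum _ hsum2
          ((summable_geometric_of_lt_one hα0.le hα1).mul_left _)
        intro i
        calc f (i + j₀) ≤ a * α ^ (i + j₀) := hfle _
          _ = a * α ^ j₀ * α ^ i := by rw [pow_add]; ring
      have h2 : ∑' i : ℕ, a * α ^ j₀ * α ^ i = a * α ^ j₀ * (1-α)⁻¹ := by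
        rw [tsum_mul_left, tsum_geometric_of_lt_one hα0.le hα1]
      calc ∑' i, f (i + j₀) ≤ a * α ^ j₀ * (1-α)⁻¹ := by rw [← h2]; exact h1
        _ ≤ a * t ^ (-δ) * (1-α)⁻¹ := by
            apply mul_le_mul_of_nonneg_right _ (inv_nonneg.mpr (by linarith))
            exact mul_le_mul_of_nonneg_left hα_le ha.le
        _ = a * (1-α)⁻¹ * t ^ (-δ) := by ring
    have hhead : ∑ i ∈ Finset.range j₀, f i ≤ K * t ^ (-δ) := by
      have hterm : ∀ i ∈ Finset.range j₀, f i ≤ a * ((n:ℝ)/(b*t))^n * r ^ i := by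
        intro i _
        have hx : 0 < b * β ^ i * t := by positivity
        have h1 : Real.exp (-b * β ^ i * t) ≤ ((n:ℝ) / (b * β ^ i * t))^n := by
          have := exp_neg_le_aux n (b * β ^ i * t) hx
          rwa [show -(b * β ^ i * t) = -b * β ^ i * t by ring] at this
        calc f i ≤ a * α ^ i * (((n:ℝ) / (b * β ^ i * t))^n) :=
              mul_le_mul_of_nonneg_left h1 (by positivity)
          _ = a * ((n:ℝ)/(b*t))^n * r ^ i := by
              rw [hr]
              field_simp
              ring
      have hgeom : ∑ i ∈ Finset.range j₀, r ^ i ≤ r ^ j₀ / (r - 1) := by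
        rw [geom_sum_eq (by linarith : r ≠ 1)]
        gcongr
        linarith
      have hrj : r ^ j₀ ≤ t ^ (-δ) * t ^ n / β ^ n := by
        have h1 : r ^ j₀ = α ^ j₀ * t ^ n / s ^ n := by
          rw [hr, hs, div_pow, mul_pow]
          field_simp
          ring
        rw [h1]
        gcongr <;> first
          | exact pow_le_pow_left₀ hβ0.le hs2 n
          | exact hα_le
          | positivity
      calc ∑ i ∈ Finset.range j₀, f i
          ≤ ∑ i ∈ Finset.range j₀, a * ((n:ℝ)/(b*t))^n * r ^ i :=
            Finset.sum_le_sum hterm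
        _ = a * ((n:ℝ)/(b*t))^n * ∑ i ∈ Finset.range j₀, r ^ i := by
            rw [Finset.mul_sum]
        _ ≤ a * ((n:ℝ)/(b*t))^n * (r ^ j₀ / (r-1)) := by
            apply mul_le_mul_of_nonneg_left hgeom (by positivity)
        _ ≤ a * ((n:ℝ)/(b*t))^n * ((t ^ (-δ) * t ^ n / β ^ n) / (r-1)) := by
            apply mul_le_mul_of_nonneg_left _ (by positivity)
            exact (div_le_div_iff_of_pos_right hr0).mpr hrj
        _ = K * t ^ (-δ) := by
            rw [hK]
            field_simp [hb.ne', ht0.ne', hβ0.ne', hr0.ne']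
            have ht' : t ^ n * t⁻¹ ^ n = 1 := by rw [← mul_pow, mul_inv_cancel₀ ht0.ne', one_pow]
            have hβ' : β ^ n * β⁻¹ ^ n = 1 := by rw [← mul_pow, mul_inv_cancel₀ hβ0.ne', one_pow]
            linear_combination ((n:ℝ) ^ n * b⁻¹ ^ n) * ht' - ((n:ℝ) ^ n * b⁻¹ ^ n) * hβ'
    calc ∑' j, f j = ∑ i ∈ Finset.range j₀, f i + ∑' i, f (i + j₀) := hsplit
      _ ≤ K * t ^ (-δ) + a * (1-α)⁻¹ * t ^ (-δ) := add_le_add hhead htail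
      _ = (a * (1-α)⁻¹ + K) * t ^ (-δ) := by ring
end

section
/- Let $W_T(n) = [q_nq_{n+1}]^{T/(2\mu^n)}$ with $q_n = 1 - p_0\varepsilon^n$, $0 < \varepsilon < \mu < 1$, $0<p_0\le 1$, $T>0$. Then for all sufficiently large $n$, $W_T(n) > W_T(n-1)$; i.e., the probability of bouncing on bond $n$ for time $T$ is increasing in $n$. -/
theorem stmt_9 (p0 ε μ T : ℝ) (hp0 : 0 < p0) (hp1 : p0 ≤ 1)
    (hε0 : 0 < ε) (hεμ : ε < μ) (hμ1 : μ < 1) (hT : 0 < T)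
    (q : ℕ → ℝ) (hq : ∀ n, q n = 1 - p0 * ε ^ n)
    (W : ℕ → ℝ) (hW : ∀ n, W n = (q n * q (n + 1)) ^ (T / (2 * μ ^ n))) :
    ∃ N : ℕ, 1 ≤ N ∧ ∀ n : ℕ, N ≤ n → W (n - 1) < W n := by
  have hμ0 : 0 < μ := hε0.trans hεμ
  have hε1 : ε < 1 := hεμ.trans hμ1
  have hδ : 0 < 1 - ε / μ := by
    have : ε / μ < 1 := (div_lt_one hμ0).2 hεμ
    linarith
  obtain ⟨n₀, hn₀⟩ := exists_pow_lt_of_lt_one hδ hε1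
  -- basic facts about q
  have hxpos : ∀ k : ℕ, 0 < p0 * ε ^ k := fun k => mul_pos hp0 (pow_pos hε0 k)
  have hx1 : ∀ k : ℕ, 1 ≤ k → p0 * ε ^ k < 1 := by
    intro k hk
    have h1 : ε ^ k ≤ ε ^ 1 := pow_le_pow_of_le_one hε0.le hε1.le hk
    have h2 : p0 * ε ^ k ≤ 1 * ε ^ 1 := by
      apply mul_le_mul hp1 h1 (pow_nonneg hε0.le k) zero_le_one
    simpa using h2.trans_lt (by linarith)
  have hqpos : ∀ k : ℕ, 1 ≤ k → 0 < q k := by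
    intro k hk; rw [hq k]; linarith [hx1 k hk]
  -- lower bound on -log (q k)
  have hlb : ∀ k : ℕ, 1 ≤ k → p0 * ε ^ k ≤ -Real.log (q k) := by
    intro k hk
    have := Real.log_le_sub_one_of_pos (hqpos k hk)
    rw [hq k] at this ⊢
    linarith
  -- upper bound on -log (q (k+1))
  have hub : ∀ k : ℕ, n₀ ≤ k + 1 → -Real.log (q (k + 1)) < μ * (p0 * ε ^ k) := by
    intro k hk
    set x := p0 * ε ^ (k + 1) with hxdef
    have hxδ : x < 1 - ε / μ := by
      have h1 : ε ^ (k + 1) ≤ ε ^ n₀ := pow_le_pow_of_le_one hε0.le hε1.le hk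
      have h2 : p0 * ε ^ (k + 1) ≤ 1 * ε ^ n₀ :=
        mul_le_mul hp1 h1 (pow_nonneg hε0.le _) zero_le_one
      calc x ≤ 1 * ε ^ n₀ := h2
        _ < 1 - ε / μ := by simpa using hn₀
    have hx0 : 0 < x := hxpos (k + 1)
    have h1x : 0 < 1 - x := by
      have : ε / μ > 0 := div_pos hε0 hμ0
      linarith
    have hlog : -Real.log (q (k + 1)) ≤ x / (1 - x) := by
      have h := Real.one_sub_inv_le_log_of_pos h1x
      rw [hq (k + 1), ← hxdef]
      have : 1 - (1 - x)⁻¹ ≤ Real.log (1 - x) := h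
      have hinv : (1 - x)⁻¹ - 1 = x / (1 - x) := by
        field_simp
        ring
      linarith
    have hfrac : x / (1 - x) < μ * (p0 * ε ^ k) := by
      rw [div_lt_iff₀ h1x]
      have hεμ' : ε / μ < 1 - x := by linarith
      have hkey : ε < μ * (1 - x) := by
        have := (div_lt_iff₀ hμ0).1 hεμ'
        linarith [this]
      have hp : 0 < p0 * ε ^ k := hxpos k
      calc x = (p0 * ε ^ k) * ε := by rw [hxdef, pow_succ]; ring
        _ < (p0 * ε ^ k) * (μ * (1 - x)) := by
            exact (mul_lt_mul_iff_right₀ hp).2 hkey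
        _ = μ * (p0 * ε ^ k) * (1 - x) := by ring
    linarith
  refine ⟨max n₀ 2, le_trans (by norm_num) (le_max_right _ _), ?_⟩
  intro n hn
  obtain ⟨m, rfl⟩ : ∃ m, n = m + 1 := by
    have : 1 ≤ n := le_trans (le_trans (by norm_num) (le_max_right n₀ 2)) hn
    exact ⟨n - 1, (Nat.succ_pred_eq_of_pos this).symm⟩
  have hm1 : 1 ≤ m := by
    have : (2 : ℕ) ≤ m + 1 := le_trans (le_max_right n₀ 2) hn
    omega
  have hn₀m : n₀ ≤ m + 1 := le_trans (le_max_left n₀ 2) hn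
  simp only [Nat.add_sub_cancel]
  rw [hW m, hW (m + 1)]
  have hq1 : 0 < q m := hqpos m hm1
  have hq2 : 0 < q (m + 1) := hqpos (m + 1) (by omega)
  have hq3 : 0 < q (m + 1 + 1) := hqpos (m + 2) (by omega)
  have hb1 : 0 < q m * q (m + 1) := mul_pos hq1 hq2
  have hb2 : 0 < q (m + 1) * q (m + 1 + 1) := mul_pos hq2 hq3
  rw [Real.rpow_def_of_pos hb1, Real.rpow_def_of_pos hb2, Real.exp_lt_exp]
  rw [Real.log_mul hq1.ne' hq2.ne', Real.log_mul hq2.ne' hq3.ne']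
  -- key inequality: μ * L1 < L2
  have hkey : μ * (Real.log (q m) + Real.log (q (m + 1)))
      < Real.log (q (m + 1)) + Real.log (q (m + 1 + 1)) := by
    have h1 := hub m hn₀m
    have h2 := hub (m + 1) (by omega)
    have h3 := hlb m hm1
    have h4 := hlb (m + 1) (by omega)
    have h3' : μ * (p0 * ε ^ m) ≤ μ * (-Real.log (q m)) :=
      mul_le_mul_of_nonneg_left h3 hμ0.le
    have h4' : μ * (p0 * ε ^ (m + 1)) ≤ μ * (-Real.log (q (m + 1))) :=
      mul_le_mul_of_nonneg_left h4 hμ0.le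
    have : Nat.succ (m + 1) = m + 1 + 1 := rfl
    nlinarith [h1, h2, h3', h4']
  -- now convert the key inequality to the exponent comparison
  have hμm : 0 < μ ^ m := pow_pos hμ0 m
  have hμm1 : 0 < μ ^ (m + 1) := pow_pos hμ0 (m + 1)
  have hc : 0 < T / (2 * μ ^ (m + 1)) := div_pos hT (by positivity)
  have hexp : T / (2 * μ ^ m) = T / (2 * μ ^ (m + 1)) * μ := by
    rw [pow_succ]
    field_simp
  rw [hexp]
  calc (Real.log (q m) + Real.log (q (m + 1))) * (T / (2 * μ ^ (m + 1)) * μ)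
      = μ * (Real.log (q m) + Real.log (q (m + 1))) * (T / (2 * μ ^ (m + 1))) := by ring
    _ < (Real.log (q (m + 1)) + Real.log (q (m + 1 + 1))) * (T / (2 * μ ^ (m + 1))) :=
        (mul_lt_mul_iff_left₀ hc).2 hkey
end
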